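/- The class of semilinear functions ℝⁿ → ℝ equals the smallest class of real-valued functions closed under composition containing (i) all affine functions with rational coefficients and (ii) the ternary function ifPos(x,y,z) = y if x > 0 and z otherwise. -/

import Mathlib

open FirstOrder

/-- Function symbols of the language `(+, 0, 1)`. -/
inductive OrdAddFunc : ℕ → Type
  | zero : OrdAddFunc 0
  | one : OrdAddFunc 0
  | add : OrdAddFunc 2

/-- Relation symbols of the language `(<)`. -/
inductive OrdAddRel : ℕ → Type
  | lt : OrdAddRel 2

/-- The first-order language of the structure `(ℝ, +, <, 0, 1)`. -/
def ordAddLang : Language := ⟨OrdAddFunc, OrdAddRel⟩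

instance : ordAddLang.Structure ℝ where
  funMap {_} f x :=
    match f with
    | OrdAddFunc.zero => 0
    | OrdAddFunc.one => 1
    | OrdAddFunc.add => x 0 + x 1
  RelMap {_} r x :=
    match r with
    | OrdAddRel.lt => x 0 < x 1

/-- A function `ℝⁿ → ℝ` is semilinear if its graph is definable without parameters
in the structure `(ℝ, +, <, 0, 1)`. -/
def Semilinear {n : ℕ} (f : (Fin n → ℝ) → ℝ) : Prop :=
  Set.Definable (∅ : Set ℝ) ordAddLang
    {v : Fin (n + 1) → ℝ | f (fun i => v i.castSucc) = v (Fin.last n)}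

/-- The smallest class of real-valued functions (of all finite arities) closed under
composition and containing (i) all affine functions with rational coefficients and
(ii) the ternary function `ifPos (x, y, z) = if x > 0 then y else z`. -/
inductive SemilinGen : {n : ℕ} → ((Fin n → ℝ) → ℝ) → Prop
  | affine {n : ℕ} (c : Fin n → ℚ) (b : ℚ) :
      SemilinGen (fun v => (∑ i, (c i : ℝ) * v i) + (b : ℝ))
  | ifPos : SemilinGen (n := 3) (fun v => if 0 < v 0 then v 1 else v 2)
  | comp {m n : ℕ} {g : (Fin m → ℝ) → ℝ} {f : Fin m → (Fin n → ℝ) → ℝ} :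
      SemilinGen g → (∀ i, SemilinGen (f i)) → SemilinGen (fun v => g (fun i => f i v))

namespace SLAux


/-- linear atom: `∑ c i * v i + b = 0` (if `eq`) or `< 0` (otherwise). -/
structure Atom (k : ℕ) where
  c : Fin k → ℚ
  b : ℚ
  eq : Bool

namespace Atom

def val {k : ℕ} (a : Atom k) (v : Fin k → ℝ) : ℝ := (∑ i, (a.c i : ℝ) * v i) + (a.b : ℝ)

def holds {k : ℕ} (a : Atom k) (v : Fin k → ℝ) : Prop :=
  if a.eq then a.val v = 0 else a.val v < 0

end Atom

def BSet {k : ℕ} (B : List (Atom k)) : Set (Fin k → ℝ) := {v | ∀ a ∈ B, a.holds v}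

def LSet {k : ℕ} (L : List (List (Atom k))) : Set (Fin k → ℝ) := {v | ∃ B ∈ L, v ∈ BSet B}

def LinSet {k : ℕ} (S : Set (Fin k → ℝ)) : Prop := ∃ L, S = LSet L

@[simp] lemma mem_BSet {k} {B : List (Atom k)} {v} : v ∈ BSet B ↔ ∀ a ∈ B, a.holds v := Iff.rfl
@[simp] lemma mem_LSet {k} {L : List (List (Atom k))} {v} : v ∈ LSet L ↔ ∃ B ∈ L, v ∈ BSet B := Iff.rfl

@[simp] lemma BSet_nil {k} : BSet ([] : List (Atom k)) = Set.univ := by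
  ext v; simp [BSet]

@[simp] lemma BSet_cons {k} (a : Atom k) (B : List (Atom k)) :
    BSet (a :: B) = {v | a.holds v} ∩ BSet B := by
  ext v; simp [BSet]

@[simp] lemma BSet_append {k} (B C : List (Atom k)) : BSet (B ++ C) = BSet B ∩ BSet C := by
  ext v; simp only [mem_BSet, List.mem_append, Set.mem_inter_iff, or_imp, forall_and]

@[simp] lemma LSet_nil {k} : LSet ([] : List (List (Atom k))) = ∅ := by
  ext v; simp [LSet]

@[simp] lemma LSet_cons {k} (B : List (Atom k)) (L : List (List (Atom k))) :
    LSet (B :: L) = BSet B ∪ LSet L := by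
  ext v; simp only [LSet, List.mem_cons, Set.mem_union, Set.mem_setOf_eq, mem_BSet]
  constructor
  · rintro ⟨B', (rfl | hB'), h⟩
    · exact Or.inl h
    · exact Or.inr ⟨B', hB', h⟩
  · rintro (h | ⟨B', hB', h⟩)
    · exact ⟨B, Or.inl rfl, h⟩
    · exact ⟨B', Or.inr hB', h⟩

@[simp] lemma LSet_append {k} (L M : List (List (Atom k))) :
    LSet (L ++ M) = LSet L ∪ LSet M := by
  ext v; simp [LSet, or_and_right, exists_or]

lemma linSet_empty {k} : LinSet (∅ : Set (Fin k → ℝ)) := ⟨[], by simp⟩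
lemma linSet_univ {k} : LinSet (Set.univ : Set (Fin k → ℝ)) := ⟨[([] : List (Atom k))], by simp⟩
lemma linSet_basic {k} (B : List (Atom k)) : LinSet (BSet B) := ⟨[B], by simp⟩
lemma linSet_atom {k} (a : Atom k) : LinSet {v : Fin k → ℝ | a.holds v} :=
  ⟨[a] :: [], by ext v; simp⟩

lemma LinSet.union {k} {S T : Set (Fin k → ℝ)} (hS : LinSet S) (hT : LinSet T) :
    LinSet (S ∪ T) := by
  obtain ⟨L, rfl⟩ := hS; obtain ⟨M, rfl⟩ := hT
  exact ⟨L ++ M, by simp⟩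

lemma LinSet.inter {k} {S T : Set (Fin k → ℝ)} (hS : LinSet S) (hT : LinSet T) :
    LinSet (S ∩ T) := by
  obtain ⟨L, rfl⟩ := hS; obtain ⟨M, rfl⟩ := hT
  refine ⟨L.flatMap (fun B => M.map (fun C => B ++ C)), ?_⟩
  ext v
  simp only [Set.mem_inter_iff, mem_LSet, List.mem_flatMap, List.mem_map]
  constructor
  · rintro ⟨⟨B, hB, hvB⟩, ⟨C, hC, hvC⟩⟩
    exact ⟨B ++ C, ⟨B, hB, C, hC, rfl⟩, by simp [hvB, hvC]⟩
  · rintro ⟨D, ⟨B, hB, C, hC, rfl⟩, hv⟩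
    rw [BSet_append] at hv
    exact ⟨⟨B, hB, hv.1⟩, ⟨C, hC, hv.2⟩⟩

@[simp] lemma holds_mk_true {k} (c : Fin k → ℚ) (b : ℚ) (v : Fin k → ℝ) :
    Atom.holds ⟨c, b, true⟩ v ↔ (∑ i, (c i : ℝ) * v i) + (b : ℝ) = 0 := by
  simp [Atom.holds, Atom.val]

@[simp] lemma holds_mk_false {k} (c : Fin k → ℚ) (b : ℚ) (v : Fin k → ℝ) :
    Atom.holds ⟨c, b, false⟩ v ↔ (∑ i, (c i : ℝ) * v i) + (b : ℝ) < 0 := by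
  simp [Atom.holds, Atom.val]

lemma sum_neg_mul {k} (c : Fin k → ℚ) (v : Fin k → ℝ) :
    ∑ i, ((-c i : ℚ) : ℝ) * v i = -∑ i, ((c i : ℚ) : ℝ) * v i := by
  rw [← Finset.sum_neg_distrib]
  congr 1; funext i; push_cast; ring

/-- complement of a single atom. -/
lemma linSet_compl_atom {k} (a : Atom k) : LinSet {v : Fin k → ℝ | a.holds v}ᶜ := by
  obtain ⟨c, b, eq⟩ := a
  cases eq
  · have : {v : Fin k → ℝ | Atom.holds ⟨c, b, false⟩ v}ᶜ
        = {v : Fin k → ℝ | Atom.holds ⟨c, b, true⟩ v}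
          ∪ {v : Fin k → ℝ | Atom.holds ⟨fun i => -(c i), -b, false⟩ v} := by
      ext v
      simp only [Set.mem_compl_iff, Set.mem_setOf_eq, Set.mem_union, holds_mk_true,
        holds_mk_false, not_lt, sum_neg_mul]
      push_cast
      constructor
      · intro h; rcases h.lt_or_eq with h' | h'
        · exact Or.inr (by linarith)
        · exact Or.inl h'.symm
      · rintro (h | h) <;> linarith
    rw [this]; exact (linSet_atom _).union (linSet_atom _)
  · have : {v : Fin k → ℝ | Atom.holds ⟨c, b, true⟩ v}ᶜ
        = {v : Fin k → ℝ | Atom.holds ⟨c, b, false⟩ v}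
          ∪ {v : Fin k → ℝ | Atom.holds ⟨fun i => -(c i), -b, false⟩ v} := by
      ext v
      simp only [Set.mem_compl_iff, Set.mem_setOf_eq, Set.mem_union, holds_mk_true,
        holds_mk_false, sum_neg_mul]
      push_cast
      constructor
      · intro h; rcases lt_or_gt_of_ne h with h' | h'
        · exact Or.inl h'
        · exact Or.inr (by linarith)
      · rintro (h | h) <;> intro h' <;> linarith
    rw [this]; exact (linSet_atom _).union (linSet_atom _)

lemma linSet_compl_basic {k} (B : List (Atom k)) : LinSet (BSet B)ᶜ := by
  induction B with
  | nil => simpa using linSet_empty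
  | cons a B ih =>
      rw [BSet_cons, Set.compl_inter]
      exact (linSet_compl_atom a).union ih

lemma LinSet.compl {k} {S : Set (Fin k → ℝ)} (hS : LinSet S) : LinSet Sᶜ := by
  obtain ⟨L, rfl⟩ := hS
  induction L with
  | nil => simpa using linSet_univ
  | cons B L ih =>
      rw [LSet_cons, Set.compl_union]
      exact (linSet_compl_basic B).inter ih


/-! ### Fourier–Motzkin elimination -/

namespace Atom

def lastc {k : ℕ} (a : Atom (k + 1)) : ℚ := a.c (Fin.last k)

/-- value of the `x`-part of an atom on `Fin (k+1)`. -/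
def rval {k : ℕ} (a : Atom (k + 1)) (x : Fin k → ℝ) : ℝ :=
  (∑ i, (a.c i.castSucc : ℝ) * x i) + (a.b : ℝ)

lemma val_snoc {k : ℕ} (a : Atom (k + 1)) (x : Fin k → ℝ) (t : ℝ) :
    a.val (Fin.snoc x t) = a.rval x + (a.lastc : ℝ) * t := by
  simp only [val, rval, lastc, Fin.sum_univ_castSucc, Fin.snoc_castSucc, Fin.snoc_last]
  ring

def restrict {k : ℕ} (a : Atom (k + 1)) : Atom k := ⟨fun i => a.c i.castSucc, a.b, a.eq⟩

lemma restrict_val {k : ℕ} (a : Atom (k + 1)) (x : Fin k → ℝ) :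
    a.restrict.val x = a.rval x := rfl

lemma holds_iff_of_val_eq {k l : ℕ} {a : Atom k} {a' : Atom l} {v w}
    (hv : a.val v = a'.val w) (he : a.eq = a'.eq) : (a.holds v ↔ a'.holds w) := by
  simp [holds, hv, he]

/-- substitute `t := ∑ d i * x i + e` into an atom on `Fin (k+1)`. -/
def subst {k : ℕ} (a : Atom (k + 1)) (d : Fin k → ℚ) (e : ℚ) : Atom k :=
  ⟨fun i => a.c i.castSucc + a.lastc * d i, a.b + a.lastc * e, a.eq⟩

lemma subst_val {k : ℕ} (a : Atom (k + 1)) (d : Fin k → ℚ) (e : ℚ) (x : Fin k → ℝ) :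
    (a.subst d e).val x = a.val (Fin.snoc x ((∑ i, (d i : ℝ) * x i) + (e : ℝ))) := by
  rw [val_snoc]
  simp only [subst, val, rval]
  push_cast
  rw [Finset.sum_congr rfl (fun i _ => add_mul (a.c i.castSucc : ℝ) _ (x i)),
    Finset.sum_add_distrib, mul_add, Finset.mul_sum]
  simp only [← mul_assoc]
  ring

/-- Fourier–Motzkin combination of an upper-bound atom `a` (positive last coefficient)
and a lower-bound atom `a'` (negative last coefficient). -/
def combine {k : ℕ} (a a' : Atom (k + 1)) : Atom k :=
  ⟨fun i => a.lastc * a'.c i.castSucc - a'.lastc * a.c i.castSucc,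
    a.lastc * a'.b - a'.lastc * a.b, false⟩

lemma combine_val {k : ℕ} (a a' : Atom (k + 1)) (x : Fin k → ℝ) :
    (a.combine a').val x = (a.lastc : ℝ) * a'.rval x - (a'.lastc : ℝ) * a.rval x := by
  simp only [combine, val, rval]
  push_cast
  rw [Finset.sum_congr rfl (fun i _ => sub_mul ((a.lastc : ℝ) * _) _ (x i)),
    Finset.sum_sub_distrib, mul_add, mul_add, Finset.mul_sum, Finset.mul_sum]
  simp only [← mul_assoc]
  ring

end Atom

open Atom in
/-- one step of Fourier–Motzkin elimination on a basic set. -/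
def fm {k : ℕ} (B : List (Atom (k + 1))) : List (Atom k) :=
  match B.find? (fun a => a.eq && decide (a.lastc ≠ 0)) with
  | some e =>
      B.map (fun a => a.subst (fun i => -(e.c i.castSucc) / e.lastc) (-e.b / e.lastc))
  | none =>
      ((B.filter (fun a => decide (a.lastc = 0))).map restrict)
        ++ (B.filter (fun a => decide (0 < a.lastc))).flatMap (fun a =>
            (B.filter (fun a' => decide (a'.lastc < 0))).map (fun a' => a.combine a'))

lemma exists_max (l : List ℝ) (h : l ≠ []) : ∃ m ∈ l, ∀ x ∈ l, x ≤ m := by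
  induction l with
  | nil => exact absurd rfl h
  | cons a l ih =>
      rcases eq_or_ne l [] with rfl | hl
      · exact ⟨a, by simp⟩
      · obtain ⟨m, hm, hall⟩ := ih hl
        rcases le_total a m with hle | hle
        · exact ⟨m, List.mem_cons_of_mem _ hm, by
            intro x hx; rcases List.mem_cons.1 hx with rfl | hx
            exacts [hle, hall x hx]⟩
        · exact ⟨a, List.mem_cons_self .., by
            intro x hx; rcases List.mem_cons.1 hx with rfl | hx
            exacts [le_refl _, (hall x hx).trans hle]⟩

lemma exists_min (l : List ℝ) (h : l ≠ []) : ∃ m ∈ l, ∀ x ∈ l, m ≤ x := by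
  obtain ⟨m, hm, hall⟩ := exists_max (l.map Neg.neg) (by simpa using h)
  obtain ⟨x, hx, rfl⟩ := List.mem_map.1 hm
  refine ⟨x, hx, fun y hy => ?_⟩
  have := hall (-y) (List.mem_map_of_mem hy)
  linarith

lemma exists_lt_list (us : List ℝ) : ∃ t, ∀ u ∈ us, t < u := by
  rcases eq_or_ne us [] with rfl | h
  · exact ⟨0, by simp⟩
  · obtain ⟨m, _, hall⟩ := exists_min us h
    exact ⟨m - 1, fun u hu => by linarith [hall u hu]⟩

lemma exists_gt_list (ls : List ℝ) : ∃ t, ∀ l ∈ ls, l < t := by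
  rcases eq_or_ne ls [] with rfl | h
  · exact ⟨0, by simp⟩
  · obtain ⟨m, _, hall⟩ := exists_max ls h
    exact ⟨m + 1, fun l hl => by linarith [hall l hl]⟩

lemma exists_between_lists (ls us : List ℝ) (h : ∀ l ∈ ls, ∀ u ∈ us, l < u) :
    ∃ t, (∀ l ∈ ls, l < t) ∧ (∀ u ∈ us, t < u) := by
  rcases eq_or_ne ls [] with rfl | hls
  · obtain ⟨t, ht⟩ := exists_lt_list us
    exact ⟨t, by simp, ht⟩
  rcases eq_or_ne us [] with rfl | hus
  · obtain ⟨t, ht⟩ := exists_gt_list ls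
    exact ⟨t, ht, by simp⟩
  obtain ⟨m, hm, hmax⟩ := exists_max ls hls
  obtain ⟨m', hm', hmin⟩ := exists_min us hus
  have hmm : m < m' := h m hm m' hm'
  refine ⟨(m + m') / 2, fun l hl => ?_, fun u hu => ?_⟩
  · have := hmax l hl; linarith
  · have := hmin u hu; linarith

/-- correctness of one Fourier–Motzkin step. -/
lemma mem_fm_iff {k : ℕ} (B : List (Atom (k + 1))) (x : Fin k → ℝ) :
    x ∈ BSet (fm B) ↔ ∃ t, Fin.snoc x t ∈ BSet B := by
  unfold fm
  cases hfind : B.find? (fun a => a.eq && decide (a.lastc ≠ 0)) with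
  | some e =>
      have hmem : e ∈ B := List.mem_of_find?_eq_some hfind
      have hp := List.find?_some hfind
      rw [Bool.and_eq_true, decide_eq_true_eq] at hp
      obtain ⟨heq, hne⟩ := hp
      set d : Fin k → ℚ := fun i => -(e.c i.castSucc) / e.lastc with hd
      set ee : ℚ := -e.b / e.lastc with hee
      set g : ℝ := (∑ i, (d i : ℝ) * x i) + (ee : ℝ) with hg
      have hgval : e.rval x + (e.lastc : ℝ) * g = 0 := by
        rw [hg, hd, hee]
        push_cast
        have hne' : (e.lastc : ℝ) ≠ 0 := by exact_mod_cast hne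
        rw [Atom.rval, mul_add, Finset.mul_sum]
        rw [Finset.sum_congr rfl (fun i (_ : i ∈ Finset.univ) =>
          show (e.lastc : ℝ) * (-(e.c i.castSucc : ℝ) / (e.lastc : ℝ) * x i)
              = -((e.c i.castSucc : ℝ) * x i) from by field_simp)]
        rw [Finset.sum_neg_distrib]
        have hb : (e.lastc : ℝ) * (-(e.b : ℝ) / (e.lastc : ℝ)) = -(e.b : ℝ) := by
          field_simp
        rw [hb]
        ring
      constructor
      · rintro hx
        refine ⟨g, fun a ha => ?_⟩
        have := hx _ (List.mem_map_of_mem ha)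
        rwa [Atom.holds_iff_of_val_eq (Atom.subst_val a d ee x) rfl] at this
      · rintro ⟨t, ht⟩
        have het := ht e hmem
        rw [Atom.holds, if_pos heq, Atom.val_snoc] at het
        have hne' : (e.lastc : ℝ) ≠ 0 := by exact_mod_cast hne
        have htg : t = g := by
          have : (e.lastc : ℝ) * t = (e.lastc : ℝ) * g := by linarith
          exact mul_left_cancel₀ hne' this
        intro a' ha'
        obtain ⟨a, ha, rfl⟩ := List.mem_map.1 ha'
        rw [Atom.holds_iff_of_val_eq (Atom.subst_val a d ee x) rfl]
        rw [← hg, ← htg]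
        exact ht a ha
  | none =>
      have hnone := List.find?_eq_none.1 hfind
      have hzero : ∀ a ∈ B, a.eq = true → a.lastc = 0 := by
        intro a ha he
        have := hnone a ha
        rw [Bool.and_eq_true, decide_eq_true_eq] at this
        by_contra hne
        exact this ⟨he, hne⟩
      constructor
      · intro hx
        set ls : List ℝ := (B.filter (fun a' => decide (a'.lastc < 0))).map
          (fun a' => -(a'.rval x) / (a'.lastc : ℝ)) with hls
        set us : List ℝ := (B.filter (fun a => decide (0 < a.lastc))).map
          (fun a => -(a.rval x) / (a.lastc : ℝ)) with hus
        have hpair : ∀ l ∈ ls, ∀ u ∈ us, l < u := by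
          rintro l hl u hu
          obtain ⟨a', ha', rfl⟩ := List.mem_map.1 hl
          obtain ⟨a, ha, rfl⟩ := List.mem_map.1 hu
          rw [List.mem_filter, decide_eq_true_eq] at ha ha'
          have hcomb := hx _ (List.mem_append_right _ (List.mem_flatMap.2
            ⟨a, List.mem_filter.2 ⟨ha.1, by simpa using ha.2⟩,
              List.mem_map_of_mem (List.mem_filter.2 ⟨ha'.1, by simpa using ha'.2⟩)⟩))
          rw [Atom.holds, if_neg (by simp [Atom.combine]), Atom.combine_val] at hcomb
          have hγ : (0 : ℝ) < (a.lastc : ℝ) := by exact_mod_cast ha.2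
          have hγ' : ((a'.lastc : ℝ)) < 0 := by exact_mod_cast ha'.2
          have hra := hcomb
          have h1 : -(a'.rval x) / (a'.lastc : ℝ) = a'.rval x / (-(a'.lastc : ℝ)) := by
            rw [div_neg, neg_div]
          rw [h1, div_lt_div_iff₀ (neg_pos.2 hγ') hγ]
          nlinarith [hra]
        obtain ⟨t, htl, htu⟩ := exists_between_lists ls us hpair
        refine ⟨t, fun a ha => ?_⟩
        have heqf : a.lastc ≠ 0 → a.eq = false := by
          intro hne
          cases h : a.eq
          · rfl
          · exact absurd (hzero a ha h) hne
        rcases lt_trichotomy a.lastc 0 with hγ | hγ | hγ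
        · have hγr : ((a.lastc : ℝ)) < 0 := by exact_mod_cast hγ
          have hl : -(a.rval x) / (a.lastc : ℝ) ∈ ls := by
            rw [hls]
            exact List.mem_map_of_mem (List.mem_filter.2 ⟨ha, by simpa using hγ⟩)
          have := htl _ hl
          rw [div_lt_iff_of_neg hγr] at this
          rw [Atom.holds, if_neg (by simp [heqf hγ.ne]), Atom.val_snoc]
          linarith
        · have hγr : ((a.lastc : ℝ)) = 0 := by exact_mod_cast hγ
          have hres := hx _ (List.mem_append_left _
            (List.mem_map_of_mem (List.mem_filter.2 ⟨ha, by simpa using hγ⟩)))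
          rwa [Atom.holds_iff_of_val_eq (v := x)
            (show a.restrict.val x = a.val (Fin.snoc x t) by
              rw [Atom.val_snoc, Atom.restrict_val, hγr]; ring) rfl] at hres
        · have hγr : (0 : ℝ) < ((a.lastc : ℝ)) := by exact_mod_cast hγ
          have hu : -(a.rval x) / (a.lastc : ℝ) ∈ us := by
            rw [hus]
            exact List.mem_map_of_mem (List.mem_filter.2 ⟨ha, by simpa using hγ⟩)
          have := htu _ hu
          rw [lt_div_iff₀ hγr] at this
          rw [Atom.holds, if_neg (by simp [heqf hγ.ne']), Atom.val_snoc]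
          linarith
      · rintro ⟨t, ht⟩ aa haa
        rcases List.mem_append.1 haa with h | h
        · obtain ⟨a, ha, rfl⟩ := List.mem_map.1 h
          rw [List.mem_filter, decide_eq_true_eq] at ha
          have hγr : ((a.lastc : ℝ)) = 0 := by exact_mod_cast ha.2
          rw [← Atom.holds_iff_of_val_eq (v := Fin.snoc x t)
            (show a.val (Fin.snoc x t) = a.restrict.val x by
              rw [Atom.val_snoc, Atom.restrict_val, hγr]; ring) rfl]
          exact ht a ha.1
        · obtain ⟨a, ha, h'⟩ := List.mem_flatMap.1 h
          obtain ⟨a', ha', rfl⟩ := List.mem_map.1 h'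
          rw [List.mem_filter, decide_eq_true_eq] at ha ha'
          have hγ : (0 : ℝ) < (a.lastc : ℝ) := by exact_mod_cast ha.2
          have hγ' : ((a'.lastc : ℝ)) < 0 := by exact_mod_cast ha'.2
          have h1 := ht a ha.1
          have h2 := ht a' ha'.1
          have heq1 : a.eq = false := by
            cases h : a.eq
            · rfl
            · exact absurd (hzero a ha.1 h) ha.2.ne'
          have heq2 : a'.eq = false := by
            cases h : a'.eq
            · rfl
            · exact absurd (hzero a' ha'.1 h) ha'.2.ne
          rw [Atom.holds, if_neg (by simp [heq1]), Atom.val_snoc] at h1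
          rw [Atom.holds, if_neg (by simp [heq2]), Atom.val_snoc] at h2
          rw [Atom.holds, if_neg (by simp [Atom.combine]), Atom.combine_val]
          nlinarith [mul_neg_of_pos_of_neg hγ h2, mul_neg_of_pos_of_neg (neg_pos.2 hγ') h1]

/-- projection: existentially quantify the last coordinate. -/
def projLast {k : ℕ} (S : Set (Fin (k + 1) → ℝ)) : Set (Fin k → ℝ) :=
  {x | ∃ t, Fin.snoc x t ∈ S}

lemma LinSet.projLast {k : ℕ} {S : Set (Fin (k + 1) → ℝ)} (hS : LinSet S) :
    LinSet (SLAux.projLast S) := by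
  obtain ⟨L, rfl⟩ := hS
  refine ⟨L.map fm, ?_⟩
  ext x
  simp only [SLAux.projLast, Set.mem_setOf_eq, mem_LSet, List.mem_map]
  constructor
  · rintro ⟨t, B, hB, hsnoc⟩
    exact ⟨fm B, ⟨B, hB, rfl⟩, (mem_fm_iff B x).2 ⟨t, hsnoc⟩⟩
  · rintro ⟨_, ⟨B, hB, rfl⟩, hx⟩
    obtain ⟨t, ht⟩ := (mem_fm_iff B x).1 hx
    exact ⟨t, B, hB, ht⟩



/-! ### remap (preimage under a variable renaming) -/

def Atom.remap {k l : ℕ} (ρ : Fin k → Fin l) (a : Atom k) : Atom l :=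
  ⟨fun j => ∑ i ∈ Finset.univ.filter (fun i => ρ i = j), a.c i, a.b, a.eq⟩

lemma Atom.remap_val {k l : ℕ} (ρ : Fin k → Fin l) (a : Atom k) (v : Fin l → ℝ) :
    (a.remap ρ).val v = a.val (v ∘ ρ) := by
  simp only [remap, val, Function.comp]
  push_cast
  congr 1
  rw [← Finset.sum_fiberwise_of_maps_to (t := Finset.univ) (g := ρ)
    (fun i _ => Finset.mem_univ _) (fun i => (a.c i : ℝ) * v (ρ i))]
  refine Finset.sum_congr rfl fun j _ => ?_
  rw [Finset.sum_mul]
  refine Finset.sum_congr rfl fun i hi => ?_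
  rw [(Finset.mem_filter.1 hi).2]

lemma LinSet.remap {k l : ℕ} (ρ : Fin k → Fin l) {S : Set (Fin k → ℝ)} (hS : LinSet S) :
    LinSet {v : Fin l → ℝ | v ∘ ρ ∈ S} := by
  obtain ⟨L, rfl⟩ := hS
  refine ⟨L.map (List.map (Atom.remap ρ)), ?_⟩
  ext v
  simp only [Set.mem_setOf_eq, mem_LSet, List.mem_map]
  constructor
  · rintro ⟨B, hB, hv⟩
    refine ⟨B.map (Atom.remap ρ), ⟨B, hB, rfl⟩, ?_⟩
    intro a' ha'
    obtain ⟨a, ha, rfl⟩ := List.mem_map.1 ha'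
    rw [Atom.holds_iff_of_val_eq (Atom.remap_val ρ a v) rfl]
    exact hv a ha
  · rintro ⟨_, ⟨B, hB, rfl⟩, hv⟩
    refine ⟨B, hB, fun a ha => ?_⟩
    rw [← Atom.holds_iff_of_val_eq (Atom.remap_val ρ a v) rfl]
    exact hv _ (List.mem_map_of_mem ha)

/-! ### iterated projection -/

def projMany {k : ℕ} : (m : ℕ) → Set (Fin (k + m) → ℝ) → Set (Fin k → ℝ)
  | 0, S => S
  | m + 1, S => projMany m (projLast S)

lemma LinSet.projMany {k : ℕ} (m : ℕ) {S : Set (Fin (k + m) → ℝ)} (hS : LinSet S) :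
    LinSet (SLAux.projMany m S) := by
  induction m with
  | zero => exact hS
  | succ m ih => exact ih hS.projLast

lemma mem_projMany {k : ℕ} (m : ℕ) (S : Set (Fin (k + m) → ℝ)) (x : Fin k → ℝ) :
    x ∈ projMany m S ↔ ∃ y : Fin m → ℝ, Fin.append x y ∈ S := by
  induction m with
  | zero =>
      simp only [projMany]
      constructor
      · intro h
        refine ⟨Fin.elim0, ?_⟩
        have : Fin.append x (Fin.elim0 : Fin 0 → ℝ) = x := by
          funext i
          simp [Fin.append, Fin.addCases, Fin.castLT]
        rwa [this]
      · rintro ⟨y, hy⟩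
        have : Fin.append x y = x := by
          funext i
          simp [Fin.append, Fin.addCases, Fin.castLT]
        rwa [this] at hy
  | succ m ih =>
      show x ∈ projMany m (projLast S) ↔ _
      rw [ih]
      constructor
      · rintro ⟨y, t, ht⟩
        exact ⟨Fin.snoc y t, by rwa [Fin.append_snoc]⟩
      · rintro ⟨Y, hY⟩
        refine ⟨Fin.init Y, Y (Fin.last m), ?_⟩
        show Fin.snoc (Fin.append x (Fin.init Y)) (Y (Fin.last m)) ∈ S
        rw [← Fin.append_snoc, Fin.snoc_init_self]
        exact hY

/-! ### graphs -/

def Graph {n : ℕ} (f : (Fin n → ℝ) → ℝ) : Set (Fin (n + 1) → ℝ) :=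
  {v | f (fun i => v i.castSucc) = v (Fin.last n)}

lemma mem_graph_snoc {n : ℕ} (f : (Fin n → ℝ) → ℝ) (x : Fin n → ℝ) (t : ℝ) :
    Fin.snoc x t ∈ Graph f ↔ f x = t := by
  have h1 : (fun i : Fin n => (Fin.snoc x t : Fin (n+1) → ℝ) i.castSucc) = x := by
    funext i; simp
  simp [Graph, h1]

/-! ### building `SemilinGen` members -/

lemma gen_congr {n : ℕ} {f g : (Fin n → ℝ) → ℝ} (h : SemilinGen f) (he : ∀ v, f v = g v) :
    SemilinGen g := (funext he : f = g) ▸ h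

lemma gen_const {n : ℕ} (r : ℚ) : SemilinGen (n := n) (fun _ => (r : ℝ)) :=
  gen_congr (SemilinGen.affine (fun _ => 0) r) (by intro v; simp)

lemma gen_ite {n : ℕ} {a b c : (Fin n → ℝ) → ℝ} (ha : SemilinGen a) (hb : SemilinGen b)
    (hc : SemilinGen c) : SemilinGen (fun v => if 0 < a v then b v else c v) := by
  refine gen_congr (SemilinGen.comp SemilinGen.ifPos (f := ![a, b, c]) ?_) (fun v => rfl)
  intro i
  fin_cases i
  exacts [ha, hb, hc]

lemma gen_sub {n : ℕ} {g h : (Fin n → ℝ) → ℝ} (hg : SemilinGen g) (hh : SemilinGen h) :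
    SemilinGen (fun v => g v - h v) := by
  refine gen_congr (SemilinGen.comp (SemilinGen.affine ![1, -1] 0) (f := ![g, h]) ?_) ?_
  · intro i; fin_cases i; exacts [hg, hh]
  · intro v
    show (∑ i : Fin 2, ((![1, -1] i : ℚ) : ℝ) * (![g, h] i v)) + ((0 : ℚ) : ℝ) = g v - h v
    rw [Fin.sum_univ_two]
    show ((1 : ℚ) : ℝ) * g v + ((-1 : ℚ) : ℝ) * h v + ((0 : ℚ) : ℝ) = g v - h v
    push_cast; ring

lemma gen_val {k : ℕ} (a : Atom k) : SemilinGen (fun x => a.val x) :=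
  gen_congr (SemilinGen.affine a.c a.b) (fun v => rfl)

lemma gen_neg_val {k : ℕ} (a : Atom k) : SemilinGen (fun x => -(a.val x)) :=
  gen_congr (SemilinGen.affine (fun i => -a.c i) (-a.b)) (by
    intro v
    show (∑ i, ((-a.c i : ℚ) : ℝ) * v i) + ((-a.b : ℚ) : ℝ) = -(a.val v)
    rw [sum_neg_mul]
    push_cast [Atom.val]
    ring)

lemma exists_indicator {k : ℕ} (B : List (Atom k)) :
    ∃ χ : (Fin k → ℝ) → ℝ, SemilinGen χ ∧ ∀ x, (0 < χ x ↔ x ∈ BSet B) := by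
  induction B with
  | nil => exact ⟨fun _ => ((1 : ℚ) : ℝ), gen_const 1, fun x => by norm_num⟩
  | cons a B ih =>
      obtain ⟨χB, hχB, hBspec⟩ := ih
      obtain ⟨χa, hχa, haspec⟩ : ∃ χa, SemilinGen χa ∧ ∀ x, (0 < χa x ↔ a.holds x) := by
        cases heq : a.eq
        · refine ⟨fun x => -(a.val x), gen_neg_val a, fun x => ?_⟩
          rw [Atom.holds, if_neg (by simp [heq])]
          simpa using neg_pos (a := a.val x)
        · refine ⟨fun x => if 0 < a.val x then 0 else if 0 < -(a.val x) then 0 else 1,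
            gen_ite (gen_val a) (gen_congr (gen_const 0) (by simp))
              (gen_ite (gen_neg_val a) (gen_congr (gen_const 0) (by simp))
                (gen_congr (gen_const 1) (by simp))), fun x => ?_⟩
          rw [Atom.holds, if_pos heq]
          by_cases h1 : 0 < a.val x
          · simp only [if_pos h1]
            constructor <;> intro h <;> [linarith; linarith]
          · by_cases h2 : 0 < -(a.val x)
            · simp only [if_neg h1, if_pos h2]
              constructor <;> intro h <;> [linarith; linarith]
            · simp only [if_neg h1, if_neg h2]
              constructor <;> intro h <;> [linarith; norm_num]
      refine ⟨fun x => if 0 < χa x - χB x then χB x else χa x,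
        gen_ite (gen_sub hχa hχB) hχB hχa, fun x => ?_⟩
      have : (0 < if 0 < χa x - χB x then χB x else χa x) ↔ (0 < χa x ∧ 0 < χB x) := by
        by_cases h : 0 < χa x - χB x
        · simp only [if_pos h]
          constructor <;> intro h' <;> [exact ⟨by linarith, h'⟩; exact h'.2]
        · simp only [if_neg h]
          constructor <;> intro h' <;> [exact ⟨h', by linarith⟩; exact h'.1]
      rw [this, haspec, hBspec]
      simp [BSet_cons]

lemma mem_subst_iff {k : ℕ} (B : List (Atom (k + 1))) (d : Fin k → ℚ) (e : ℚ) (x : Fin k → ℝ) :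
    x ∈ BSet (B.map (fun a => a.subst d e))
      ↔ Fin.snoc x ((∑ i, (d i : ℝ) * x i) + (e : ℝ)) ∈ BSet B := by
  constructor
  · intro h a ha
    rw [← Atom.holds_iff_of_val_eq (Atom.subst_val a d e x) rfl]
    exact h _ (List.mem_map_of_mem ha)
  · intro h a' ha'
    obtain ⟨a, ha, rfl⟩ := List.mem_map.1 ha'
    rw [Atom.holds_iff_of_val_eq (Atom.subst_val a d e x) rfl]
    exact h a ha

lemma holds_last_eq {k : ℕ} (e : Atom (k + 1)) (heq : e.eq = true) (hne : e.lastc ≠ 0)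
    (x : Fin k → ℝ) (t : ℝ) (h : e.holds (Fin.snoc x t)) :
    t = (∑ i, ((-(e.c i.castSucc) / e.lastc : ℚ) : ℝ) * x i) + ((-e.b / e.lastc : ℚ) : ℝ) := by
  rw [Atom.holds, if_pos heq, Atom.val_snoc] at h
  have hne' : (e.lastc : ℝ) ≠ 0 := by exact_mod_cast hne
  have hgval : e.rval x + (e.lastc : ℝ) *
      ((∑ i, ((-(e.c i.castSucc) / e.lastc : ℚ) : ℝ) * x i) + ((-e.b / e.lastc : ℚ) : ℝ)) = 0 := by
    push_cast
    rw [Atom.rval, mul_add, Finset.mul_sum]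
    rw [Finset.sum_congr rfl (fun i (_ : i ∈ Finset.univ) =>
      show (e.lastc : ℝ) * (-(e.c i.castSucc : ℝ) / (e.lastc : ℝ) * x i)
          = -((e.c i.castSucc : ℝ) * x i) from by field_simp)]
    rw [Finset.sum_neg_distrib]
    have hb : (e.lastc : ℝ) * (-(e.b : ℝ) / (e.lastc : ℝ)) = -(e.b : ℝ) := by
      field_simp
    rw [hb]; ring
  have := sub_eq_zero.2 (h.trans hgval.symm)
  have h2 : (e.lastc : ℝ) * (t - ((∑ i, ((-(e.c i.castSucc) / e.lastc : ℚ) : ℝ) * x i)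
      + ((-e.b / e.lastc : ℚ) : ℝ))) = 0 := by linarith [this]
  rcases mul_eq_zero.1 h2 with h3 | h3
  · exact absurd h3 hne'
  · linarith [h3]

/-- a basic piece of a graph with no equation involving the last variable is empty. -/
lemma bset_empty_of_no_eq {n : ℕ} {f : (Fin n → ℝ) → ℝ} (B : List (Atom (n + 1)))
    (hsub : BSet B ⊆ Graph f) (hz : ∀ a ∈ B, a.eq = true → a.lastc = 0) :
    BSet B = ∅ := by
  by_contra hne
  obtain ⟨v, hv⟩ := Set.nonempty_iff_ne_empty.2 hne
  set x : Fin n → ℝ := fun i => v i.castSucc with hx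
  set t : ℝ := v (Fin.last n) with ht
  have hvsnoc : Fin.snoc x t = v := by
    rw [hx, ht]; exact Fin.snoc_init_self v
  have hopen : IsOpen {s : ℝ | Fin.snoc x s ∈ BSet B} := by
    have : {s : ℝ | Fin.snoc x s ∈ BSet B}
        = ⋂ a ∈ {a : Atom (n + 1) | a ∈ B}, {s | a.holds (Fin.snoc x s)} := by
      ext s; simp [BSet]
    rw [this]
    refine Set.Finite.isOpen_biInter (List.finite_toSet B) (fun a ha => ?_)
    rw [Set.mem_setOf_eq] at ha
    cases heq : a.eq
    · have : {s : ℝ | a.holds (Fin.snoc x s)}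
          = {s : ℝ | a.rval x + (a.lastc : ℝ) * s < 0} := by
        ext s; rw [Set.mem_setOf_eq, Atom.holds, if_neg (by simp [heq]), Atom.val_snoc]; rfl
      rw [this]
      exact isOpen_lt (continuous_const.add (continuous_const.mul continuous_id)) continuous_const
    · have hz' : (a.lastc : ℝ) = 0 := by exact_mod_cast hz a ha heq
      have : {s : ℝ | a.holds (Fin.snoc x s)} = {s : ℝ | a.rval x = 0} := by
        ext s
        rw [Set.mem_setOf_eq, Atom.holds, if_pos heq, Atom.val_snoc, hz', Set.mem_setOf_eq]
        constructor <;> intro h <;> linarith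
      rw [this]
      by_cases h : a.rval x = 0
      · have : {s : ℝ | a.rval x = 0} = Set.univ := by ext s; simp [h]
        rw [this]; exact isOpen_univ
      · have : {s : ℝ | a.rval x = 0} = ∅ := by ext s; simp [h]
        rw [this]; exact isOpen_empty
  have htmem : t ∈ {s : ℝ | Fin.snoc x s ∈ BSet B} := by
    rw [Set.mem_setOf_eq, hvsnoc]; exact hv
  obtain ⟨ε, hε, hball⟩ := Metric.isOpen_iff.1 hopen t htmem
  have h1 : t + ε / 2 ∈ {s : ℝ | Fin.snoc x s ∈ BSet B} := by
    apply hball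
    rw [Metric.mem_ball, Real.dist_eq]
    rw [show t + ε / 2 - t = ε / 2 by ring, abs_of_pos (by linarith)]
    linarith
  have hf1 : f x = t + ε / 2 := (mem_graph_snoc f x _).1 (hsub h1)
  have hf2 : f x = t := (mem_graph_snoc f x t).1 (hsub (by rw [hvsnoc]; exact hv))
  linarith

/-- the main extraction: a function whose graph is a `LSet` is generated. -/
lemma gen_of_graph {n : ℕ} {f : (Fin n → ℝ) → ℝ} (L : List (List (Atom (n + 1))))
    (hL : LSet L = Graph f) : SemilinGen f := by
  have hcover : ∀ x, Fin.snoc x (f x) ∈ LSet L := by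
    intro x; rw [hL]; exact (mem_graph_snoc f x (f x)).2 rfl
  have hsub : ∀ B ∈ L, BSet B ⊆ Graph f := by
    intro B hB v hv
    rw [← hL]; exact ⟨B, hB, hv⟩
  clear hL
  suffices h : ∃ h, SemilinGen h ∧ ∀ x, Fin.snoc x (f x) ∈ LSet L → h x = f x by
    obtain ⟨h, hgen, hspec⟩ := h
    exact gen_congr hgen (fun x => hspec x (hcover x))
  clear hcover
  induction L with
  | nil => exact ⟨fun _ => ((0 : ℚ) : ℝ), gen_const 0, fun x hx => by simp at hx⟩
  | cons B L ih =>
      obtain ⟨h', hgen', hspec'⟩ := ih (fun C hC => hsub C (List.mem_cons_of_mem _ hC))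
      have hsubB : BSet B ⊆ Graph f := hsub B (List.mem_cons_self ..)
      by_cases hB : ∃ e ∈ B, e.eq = true ∧ e.lastc ≠ 0
      · obtain ⟨e, heB, heq, hne⟩ := hB
        set d : Fin n → ℚ := fun i => -(e.c i.castSucc) / e.lastc with hd
        set ee : ℚ := -e.b / e.lastc with hee
        set gv : (Fin n → ℝ) → ℝ := fun x => (∑ i, (d i : ℝ) * x i) + (ee : ℝ) with hgv
        have hgvgen : SemilinGen gv := SemilinGen.affine d ee
        obtain ⟨χ, hχ, hχspec⟩ := exists_indicator (B.map (fun a => a.subst d ee))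
        refine ⟨fun x => if 0 < χ x then gv x else h' x, gen_ite hχ hgvgen hgen', fun x hx => ?_⟩
        show (if 0 < χ x then gv x else h' x) = f x
        by_cases hχx : 0 < χ x
        · rw [if_pos hχx]
          have hxD := (hχspec x).1 hχx
          have := (mem_subst_iff B d ee x).1 hxD
          exact ((mem_graph_snoc f x (gv x)).1 (hsubB this)).symm
        · rw [if_neg hχx]
          apply hspec'
          rw [LSet_cons] at hx
          rcases hx with hx | hx
          · exfalso
            apply hχx
            rw [hχspec x, mem_subst_iff B d ee x]
            have : f x = gv x := holds_last_eq e heq hne x (f x) (hx e heB)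
            show Fin.snoc x (gv x) ∈ BSet B
            rw [← this]
            exact hx
          · exact hx
      · push_neg at hB
        have hz : ∀ a ∈ B, a.eq = true → a.lastc = 0 := by
          intro a ha he
          by_contra hne
          exact hne (hB a ha he)
        have hempty := bset_empty_of_no_eq B hsubB hz
        refine ⟨h', hgen', fun x hx => ?_⟩
        apply hspec'
        rw [LSet_cons] at hx
        rcases hx with hx | hx
        · rw [hempty] at hx; exact absurd hx (Set.notMem_empty _)
        · exact hx

/-! ### graphs of generated functions are linear sets -/

lemma graph_linSet_affine {n : ℕ} (c : Fin n → ℚ) (b : ℚ) :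
    LinSet (Graph (fun v => (∑ i, (c i : ℝ) * v i) + (b : ℝ))) := by
  have h := linSet_atom (k := n + 1) ⟨Fin.snoc c (-1), b, true⟩
  convert h using 1
  ext v
  simp only [Graph, Set.mem_setOf_eq, Atom.holds, if_pos rfl, Atom.val,
    Fin.sum_univ_castSucc, Fin.snoc_castSucc, Fin.snoc_last]
  push_cast
  constructor <;> intro h' <;> linarith

lemma graph_linSet_ifPos :
    LinSet (Graph (n := 3) (fun v => if 0 < v 0 then v 1 else v 2)) := by
  have hApos := linSet_atom (k := 4) ⟨![-1, 0, 0, 0], 0, false⟩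
  have hAneg := linSet_atom (k := 4) ⟨![1, 0, 0, 0], 0, false⟩
  have hAzero := linSet_atom (k := 4) ⟨![1, 0, 0, 0], 0, true⟩
  have hE13 := linSet_atom (k := 4) ⟨![0, 1, 0, -1], 0, true⟩
  have hE23 := linSet_atom (k := 4) ⟨![0, 0, 1, -1], 0, true⟩
  have h := ((hApos.inter hE13).union ((hAneg.union hAzero).inter hE23))
  convert h using 1
  ext v
  have e0 : ((0 : Fin 3).castSucc : Fin 4) = 0 := rfl
  have e1 : ((1 : Fin 3).castSucc : Fin 4) = 1 := rfl
  have e2 : ((2 : Fin 3).castSucc : Fin 4) = 2 := rfl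
  have e3 : (Fin.last 3 : Fin 4) = 3 := rfl
  simp only [Graph, Set.mem_setOf_eq, Set.mem_union, Set.mem_inter_iff, Atom.holds,
    Atom.val, if_pos rfl, if_neg (Bool.false_ne_true), Fin.sum_univ_four, e0, e1, e2, e3,
    Matrix.cons_val]
  norm_num
  by_cases h0 : 0 < v 0
  · simp only [if_pos h0]
    constructor
    · intro h'
      exact Or.inl ⟨h0, by linarith⟩
    · rintro (⟨_, h'⟩ | ⟨h', _⟩)
      · linarith
      · rcases h' with h' | h' <;> linarith
  · simp only [if_neg h0]
    constructor
    · intro h'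
      refine Or.inr ⟨?_, by linarith⟩
      rcases lt_or_eq_of_le (not_lt.1 h0) with h'' | h''
      · exact Or.inl h''
      · exact Or.inr h''
    · rintro (⟨h', _⟩ | ⟨_, h'⟩)
      · exact absurd h' h0
      · linarith

lemma linSet_iInter {m k : ℕ} (S : Fin m → Set (Fin k → ℝ)) (h : ∀ i, LinSet (S i)) :
    LinSet (⋂ i, S i) := by
  induction m with
  | zero => simpa [Set.iInter_of_empty] using linSet_univ
  | succ m ih =>
      have : (⋂ i, S i) = (⋂ i : Fin m, S i.castSucc) ∩ S (Fin.last m) := by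
        ext v
        simp only [Set.mem_iInter, Set.mem_inter_iff]
        exact Fin.forall_fin_succ'
      rw [this]
      exact (ih _ (fun i => h i.castSucc)).inter (h (Fin.last m))

lemma graph_linSet_comp {m n : ℕ} {g : (Fin m → ℝ) → ℝ} {fv : Fin m → (Fin n → ℝ) → ℝ}
    (hg : LinSet (Graph g)) (hf : ∀ i, LinSet (Graph (fv i))) :
    LinSet (Graph (fun v => g (fun i => fv i v))) := by
  set ρ : Fin m → Fin (n + 1) → Fin ((n + 1) + m) :=
    fun i => Fin.snoc (fun j : Fin n => Fin.castAdd m j.castSucc) (Fin.natAdd (n + 1) i) with hρ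
  set σ : Fin (m + 1) → Fin ((n + 1) + m) :=
    Fin.snoc (Fin.natAdd (n + 1)) (Fin.castAdd m (Fin.last n)) with hσ
  set T : Set (Fin ((n + 1) + m) → ℝ) :=
    {w | w ∘ σ ∈ Graph g} ∩ ⋂ i, {w | w ∘ ρ i ∈ Graph (fv i)} with hT
  have hTlin : LinSet T :=
    (hg.remap σ).inter (linSet_iInter _ (fun i => (hf i).remap (ρ i)))
  have key : Graph (fun v => g (fun i => fv i v)) = projMany m T := by
    ext w
    rw [mem_projMany]
    have hmem1 : ∀ (y : Fin m → ℝ) (i : Fin m),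
        (Fin.append w y ∘ ρ i ∈ Graph (fv i)) ↔ fv i (fun j => w j.castSucc) = y i := by
      intro y i
      have hc : (fun j : Fin n => (Fin.append w y ∘ ρ i) j.castSucc)
          = fun j => w j.castSucc := by
        funext j
        show Fin.append w y (ρ i j.castSucc) = w j.castSucc
        rw [hρ]
        simp only [Fin.snoc_castSucc]
        exact Fin.append_left w y _
      have hl : (Fin.append w y ∘ ρ i) (Fin.last n) = y i := by
        show Fin.append w y (ρ i (Fin.last n)) = y i
        rw [hρ]
        simp only [Fin.snoc_last]
        exact Fin.append_right w y _
      simp only [Graph, Set.mem_setOf_eq, hc, hl]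
    have hmem2 : ∀ (y : Fin m → ℝ),
        (Fin.append w y ∘ σ ∈ Graph g) ↔ g y = w (Fin.last n) := by
      intro y
      have hc : (fun j : Fin m => (Fin.append w y ∘ σ) j.castSucc) = y := by
        funext j
        show Fin.append w y (σ j.castSucc) = y j
        rw [hσ]
        simp only [Fin.snoc_castSucc]
        exact Fin.append_right w y _
      have hl : (Fin.append w y ∘ σ) (Fin.last m) = w (Fin.last n) := by
        show Fin.append w y (σ (Fin.last m)) = w (Fin.last n)
        rw [hσ]
        simp only [Fin.snoc_last]
        exact Fin.append_left w y _
      simp only [Graph, Set.mem_setOf_eq, hc, hl]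
    constructor
    · intro hw
      refine ⟨fun i => fv i (fun j => w j.castSucc), ?_, ?_⟩
      · exact (hmem2 _).2 hw
      · exact Set.mem_iInter.2 (fun i => (hmem1 _ i).2 rfl)
    · rintro ⟨y, hy1, hy2⟩
      have hy : ∀ i, fv i (fun j => w j.castSucc) = y i :=
        fun i => (hmem1 y i).1 (Set.mem_iInter.1 hy2 i)
      have : g y = w (Fin.last n) := (hmem2 y).1 hy1
      show g (fun i => fv i (fun j => w j.castSucc)) = w (Fin.last n)
      rw [show (fun i => fv i (fun j => w j.castSucc)) = y from funext hy]
      exact this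
  rw [key]
  exact hTlin.projMany m

lemma graph_linSet {n : ℕ} {f : (Fin n → ℝ) → ℝ} (h : SemilinGen f) : LinSet (Graph f) := by
  induction h with
  | affine c b => exact graph_linSet_affine c b
  | ifPos => exact graph_linSet_ifPos
  | comp hg hf ihg ihf => exact graph_linSet_comp ihg ihf

/-! ### from linear sets to definability -/

open FirstOrder.Language

def tZero {α : Type} : ordAddLang.Term α := Term.func (OrdAddFunc.zero) finZeroElim
def tOne {α : Type} : ordAddLang.Term α := Term.func (OrdAddFunc.one) finZeroElim
def tAdd {α : Type} (s t : ordAddLang.Term α) : ordAddLang.Term α :=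
  Term.func (OrdAddFunc.add) ![s, t]

@[simp] lemma realize_tZero {α : Type} (u : α → ℝ) : (tZero : ordAddLang.Term α).realize u = 0 :=
  rfl
@[simp] lemma realize_tOne {α : Type} (u : α → ℝ) : (tOne : ordAddLang.Term α).realize u = 1 :=
  rfl
@[simp] lemma realize_tAdd {α : Type} (s t : ordAddLang.Term α) (u : α → ℝ) :
    (tAdd s t).realize u = s.realize u + t.realize u := rfl

def nsmulT {α : Type} : ℕ → ordAddLang.Term α → ordAddLang.Term α
  | 0, _ => tZero
  | n + 1, t => tAdd t (nsmulT n t)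

@[simp] lemma realize_nsmulT {α : Type} (n : ℕ) (t : ordAddLang.Term α) (u : α → ℝ) :
    (nsmulT n t).realize u = (n : ℝ) * t.realize u := by
  induction n with
  | zero => simp [nsmulT]
  | succ n ih => rw [nsmulT, realize_tAdd, ih]; push_cast; ring

def addListT {α : Type} : List (ordAddLang.Term α) → ordAddLang.Term α :=
  List.foldr tAdd tZero

@[simp] lemma realize_addListT {α : Type} (l : List (ordAddLang.Term α)) (u : α → ℝ) :
    (addListT l).realize u = (l.map (fun t => t.realize u)).sum := by
  induction l with
  | nil => simp [addListT]
  | cons t l ih =>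
      show (tAdd t (addListT l)).realize u = _
      rw [realize_tAdd, ih, List.map_cons, List.sum_cons]

def natT {k : ℕ} (p : Fin k → ℕ) (m : ℕ) : ordAddLang.Term (Fin k ⊕ Fin 0) :=
  tAdd (addListT (List.ofFn (fun i => nsmulT (p i) (Term.var (Sum.inl i))))) (nsmulT m tOne)

lemma realize_natT {k : ℕ} (p : Fin k → ℕ) (m : ℕ) (u : (Fin k ⊕ Fin 0) → ℝ) :
    (natT p m).realize u = (∑ i, (p i : ℝ) * u (Sum.inl i)) + (m : ℝ) := by
  rw [natT, realize_tAdd, realize_addListT, realize_nsmulT, realize_tOne, mul_one,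
    List.map_ofFn, List.sum_ofFn]
  congr 1
  refine Finset.sum_congr rfl (fun i _ => ?_)
  show (nsmulT (p i) (Term.var (Sum.inl i))).realize u = _
  rw [realize_nsmulT]
  rfl

lemma rat_mul_den_dvd (r : ℚ) (D : ℕ) (h : (r.den : ℕ) ∣ D) : ∃ z : ℤ, (z : ℚ) = r * D := by
  obtain ⟨t, ht⟩ := h
  refine ⟨r.num * t, ?_⟩
  rw [ht]
  push_cast
  rw [← mul_assoc, Rat.mul_den_eq_num]

lemma exists_nat_combo {k : ℕ} (c : Fin k → ℚ) (b : ℚ) :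
    ∃ (D : ℕ) (p q : Fin k → ℕ) (pb qb : ℕ), 0 < D ∧ ∀ v : Fin k → ℝ,
      (D : ℝ) * ((∑ i, (c i : ℝ) * v i) + (b : ℝ))
        = ((∑ i, (p i : ℝ) * v i) + (pb : ℝ)) - ((∑ i, (q i : ℝ) * v i) + (qb : ℝ)) := by
  set D : ℕ := b.den * ∏ i, (c i).den with hD
  have hDpos : 0 < D := Nat.mul_pos b.pos (Finset.prod_pos (fun i _ => (c i).pos))
  have hdvd : ∀ i, ((c i).den : ℕ) ∣ D :=
    fun i => dvd_mul_of_dvd_right (Finset.dvd_prod_of_mem _ (Finset.mem_univ i)) _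
  have hdvdb : (b.den : ℕ) ∣ D := dvd_mul_right _ _
  choose z hz using fun i => rat_mul_den_dvd (c i) D (hdvd i)
  obtain ⟨zb, hzb⟩ := rat_mul_den_dvd b D hdvdb
  refine ⟨D, fun i => (z i).toNat, fun i => (-(z i)).toNat, zb.toNat, (-zb).toNat, hDpos, ?_⟩
  intro v
  have hzr : ∀ i, (((z i).toNat : ℝ) - ((-(z i)).toNat : ℝ)) = (c i : ℝ) * D := by
    intro i
    have h1 : (((z i).toNat : ℤ) : ℝ) - (((-(z i)).toNat : ℤ) : ℝ) = ((z i : ℤ) : ℝ) := by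
      rw [← Int.cast_sub]
      exact_mod_cast congrArg (Int.cast : ℤ → ℝ) (Int.toNat_sub_toNat_neg (z i))
    have h2 : ((z i : ℤ) : ℝ) = (c i : ℝ) * D := by exact_mod_cast congrArg (Rat.cast : ℚ → ℝ) (hz i)
    rw [← h2, ← h1]
    norm_cast
  have hzbr : ((zb.toNat : ℝ) - ((-zb).toNat : ℝ)) = (b : ℝ) * D := by
    have h1 : ((zb.toNat : ℤ) : ℝ) - (((-zb).toNat : ℤ) : ℝ) = ((zb : ℤ) : ℝ) := by
      rw [← Int.cast_sub]
      exact_mod_cast congrArg (Int.cast : ℤ → ℝ) (Int.toNat_sub_toNat_neg zb)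
    have h2 : ((zb : ℤ) : ℝ) = (b : ℝ) * D := by exact_mod_cast congrArg (Rat.cast : ℚ → ℝ) hzb
    rw [← h2, ← h1]
    norm_cast
  rw [mul_add, Finset.mul_sum]
  rw [Finset.sum_congr rfl (fun i (_ : i ∈ Finset.univ) =>
    show (D : ℝ) * ((c i : ℝ) * v i) = (((z i).toNat : ℝ) - ((-(z i)).toNat : ℝ)) * v i from by
      rw [hzr i]; ring)]
  rw [show (D : ℝ) * (b : ℝ) = ((zb.toNat : ℝ) - ((-zb).toNat : ℝ)) from by rw [hzbr]; ring]
  rw [Finset.sum_congr rfl (fun i (_ : i ∈ Finset.univ) =>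
    sub_mul ((z i).toNat : ℝ) (((-(z i)).toNat : ℝ)) (v i)), Finset.sum_sub_distrib]
  ring

lemma atom_definable {k : ℕ} (a : Atom k) :
    ∃ φ : ordAddLang.Formula (Fin k), ∀ v : Fin k → ℝ, (φ.Realize v ↔ a.holds v) := by
  obtain ⟨D, p, q, pb, qb, hD, hcombo⟩ := exists_nat_combo a.c a.b
  have hDr : (0 : ℝ) < (D : ℝ) := by exact_mod_cast hD
  have relMap_lt : ∀ x y : ℝ, Structure.RelMap (L := ordAddLang) (M := ℝ)
      (OrdAddRel.lt : ordAddLang.Relations 2) ![x, y] ↔ x < y := fun x y => Iff.rfl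
  cases heq : a.eq
  · refine ⟨Relations.boundedFormula₂ (OrdAddRel.lt : ordAddLang.Relations 2)
      (natT p pb) (natT q qb), fun v => ?_⟩
    rw [Formula.Realize]
    erw [BoundedFormula.realize_rel₂, relMap_lt]
    rw [Atom.holds, if_neg (by simp [heq]), realize_natT, realize_natT]
    simp only [Sum.elim_inl]
    have hval : a.val v = (∑ i, (a.c i : ℝ) * v i) + (a.b : ℝ) := rfl
    rw [hval]
    have hc := hcombo v
    constructor
    · intro h
      by_contra h'
      push_neg at h'
      have h2 : 0 ≤ (D : ℝ) * ((∑ i, (a.c i : ℝ) * v i) + (a.b : ℝ)) := mul_nonneg hDr.le h'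
      linarith
    · intro h
      have h2 : (D : ℝ) * ((∑ i, (a.c i : ℝ) * v i) + (a.b : ℝ)) < 0 :=
        mul_neg_of_pos_of_neg hDr h
      linarith
  · refine ⟨Term.bdEqual (natT p pb) (natT q qb), fun v => ?_⟩
    rw [Formula.Realize, BoundedFormula.realize_bdEqual, Atom.holds, if_pos heq,
      realize_natT, realize_natT]
    simp only [Sum.elim_inl]
    have hval : a.val v = (∑ i, (a.c i : ℝ) * v i) + (a.b : ℝ) := rfl
    rw [hval]
    have hc := hcombo v
    constructor
    · intro h
      have h2 : (D : ℝ) * ((∑ i, (a.c i : ℝ) * v i) + (a.b : ℝ)) = 0 := by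
        rw [hc, h, sub_self]
      rcases mul_eq_zero.1 h2 with h' | h'
      · exact absurd h' hDr.ne'
      · exact h'
    · intro h
      have h2 : (D : ℝ) * ((∑ i, (a.c i : ℝ) * v i) + (a.b : ℝ)) = 0 := by
        rw [h, mul_zero]
      linarith

lemma bset_definable {k : ℕ} (B : List (Atom k)) :
    ∃ φ : ordAddLang.Formula (Fin k), ∀ v : Fin k → ℝ, (φ.Realize v ↔ v ∈ BSet B) := by
  induction B with
  | nil => exact ⟨⊤, fun v => by simp⟩
  | cons a B ih =>
      obtain ⟨φB, hφB⟩ := ih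
      obtain ⟨φa, hφa⟩ := atom_definable a
      refine ⟨φa ⊓ φB, fun v => ?_⟩
      rw [Formula.Realize, BoundedFormula.realize_inf, BSet_cons]
      constructor
      · rintro ⟨h1, h2⟩
        exact ⟨(hφa v).1 h1, (hφB v).1 h2⟩
      · rintro ⟨h1, h2⟩
        exact ⟨(hφa v).2 h1, (hφB v).2 h2⟩

lemma linSet_definable {k : ℕ} {S : Set (Fin k → ℝ)} (h : LinSet S) :
    Set.Definable (∅ : Set ℝ) ordAddLang S := by
  obtain ⟨L, rfl⟩ := h
  rw [Set.empty_definable_iff]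
  induction L with
  | nil => exact ⟨⊥, by ext v; simp⟩
  | cons B L ih =>
      obtain ⟨φL, hφL⟩ := ih
      obtain ⟨φB, hφB⟩ := bset_definable B
      refine ⟨φB ⊔ φL, ?_⟩
      ext v
      rw [LSet_cons]
      constructor
      · rintro (h | h)
        · exact show (φB ⊔ φL).Realize v from BoundedFormula.realize_sup.2 (Or.inl ((hφB v).2 h))
        · have hL : φL.Realize v := by rw [hφL] at h; exact h
          exact show (φB ⊔ φL).Realize v from BoundedFormula.realize_sup.2 (Or.inr hL)
      · intro h
        rcases BoundedFormula.realize_sup.1 h with h | h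
        · exact Or.inl ((hφB v).1 h)
        · right; rw [hφL]; exact h

/-! ### from definability to linear sets -/

lemma term_normal {α : Type} [Fintype α] [DecidableEq α] (t : ordAddLang.Term α) :
    ∃ (coef : α → ℕ) (cst : ℕ), ∀ u : α → ℝ,
      t.realize u = (∑ s, (coef s : ℝ) * u s) + (cst : ℝ) := by
  induction t with
  | var s =>
      refine ⟨fun s' => if s' = s then 1 else 0, 0, fun u => ?_⟩
      have h : ∀ s', (((if s' = s then 1 else 0 : ℕ)) : ℝ) * u s'
          = if s' = s then u s' else 0 := by
        intro s'; split <;> simp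
      rw [Finset.sum_congr rfl (fun s' _ => h s'), Finset.sum_ite_eq' Finset.univ s u]
      show u s = _
      simp
  | func f ts ih =>
      cases f with
      | zero => exact ⟨fun _ => 0, 0, fun u => by show (0 : ℝ) = _; simp⟩
      | one => exact ⟨fun _ => 0, 1, fun u => by show (1 : ℝ) = _; simp⟩
      | add =>
          obtain ⟨c1, k1, h1⟩ := ih 0
          obtain ⟨c2, k2, h2⟩ := ih 1
          refine ⟨fun s => c1 s + c2 s, k1 + k2, fun u => ?_⟩
          show (ts 0).realize u + (ts 1).realize u = _
          rw [h1 u, h2 u]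
          push_cast
          rw [Finset.sum_congr rfl (fun s (_ : s ∈ Finset.univ) =>
            add_mul (c1 s : ℝ) (c2 s : ℝ) (u s)), Finset.sum_add_distrib]
          ring

lemma linSet_term_cmp {p q : ℕ} (t₁ t₂ : ordAddLang.Term (Fin p ⊕ Fin q)) (eqflag : Bool) :
    LinSet {w : Fin (p + q) → ℝ |
      if eqflag then t₁.realize (Sum.elim (w ∘ Fin.castAdd q) (w ∘ Fin.natAdd p))
          = t₂.realize (Sum.elim (w ∘ Fin.castAdd q) (w ∘ Fin.natAdd p))
        else t₁.realize (Sum.elim (w ∘ Fin.castAdd q) (w ∘ Fin.natAdd p))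
          < t₂.realize (Sum.elim (w ∘ Fin.castAdd q) (w ∘ Fin.natAdd p))} := by
  obtain ⟨c1, k1, h1⟩ := term_normal t₁
  obtain ⟨c2, k2, h2⟩ := term_normal t₂
  set e := (finSumFinEquiv : Fin p ⊕ Fin q ≃ Fin (p + q)) with he
  have hatom := linSet_atom (k := p + q)
    ⟨fun j => (c1 (e.symm j) : ℚ) - (c2 (e.symm j) : ℚ), (k1 : ℚ) - (k2 : ℚ), eqflag⟩
  convert hatom using 1
  ext w
  have hu : ∀ s, Sum.elim (w ∘ Fin.castAdd q) (w ∘ Fin.natAdd p) s = w (e s) := by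
    rintro (i | j)
    · rw [show e (Sum.inl i) = Fin.castAdd q i from finSumFinEquiv_apply_left i]; rfl
    · rw [show e (Sum.inr j) = Fin.natAdd p j from finSumFinEquiv_apply_right j]; rfl
  have hsum : ∀ (c : Fin p ⊕ Fin q → ℕ),
      (∑ s, (c s : ℝ) * Sum.elim (w ∘ Fin.castAdd q) (w ∘ Fin.natAdd p) s)
        = ∑ j, (c (e.symm j) : ℝ) * w j :=
    fun c => Fintype.sum_equiv e _ _ (fun s => by rw [hu s, Equiv.symm_apply_apply])
  have hval : Atom.val ⟨fun j => (c1 (e.symm j) : ℚ) - (c2 (e.symm j) : ℚ),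
      (k1 : ℚ) - (k2 : ℚ), eqflag⟩ w
      = (t₁.realize (Sum.elim (w ∘ Fin.castAdd q) (w ∘ Fin.natAdd p)))
        - (t₂.realize (Sum.elim (w ∘ Fin.castAdd q) (w ∘ Fin.natAdd p))) := by
    rw [h1, h2, Atom.val]
    push_cast
    rw [Finset.sum_congr rfl (fun j (_ : j ∈ Finset.univ) =>
      sub_mul ((c1 (e.symm j)) : ℝ) ((c2 (e.symm j)) : ℝ) (w j)), Finset.sum_sub_distrib,
      ← hsum c1, ← hsum c2]
    ring
  cases eqflag
  · simp only [Set.mem_setOf_eq, Atom.holds, hval, Bool.false_eq_true, if_false]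
    exact sub_neg.symm
  · simp only [Set.mem_setOf_eq, Atom.holds, hval, if_true]
    exact sub_eq_zero.symm

lemma bform_linSet {p : ℕ} {q : ℕ} (φ : ordAddLang.BoundedFormula (Fin p) q) :
    LinSet {w : Fin (p + q) → ℝ | φ.Realize (w ∘ Fin.castAdd q) (w ∘ Fin.natAdd p)} := by
  induction φ with
  | falsum =>
      rename_i qq
      have h : {w : Fin (p + qq) → ℝ |
          (BoundedFormula.falsum : ordAddLang.BoundedFormula (Fin p) qq).Realize
            (w ∘ Fin.castAdd qq) (w ∘ Fin.natAdd p)}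
          = ∅ := by
        ext w
        simp only [Set.mem_setOf_eq, Set.mem_empty_iff_false]
        exact iff_false_intro (fun hh => hh)
      rw [h]; exact linSet_empty
  | equal t₁ t₂ => exact linSet_term_cmp t₁ t₂ true
  | rel R ts =>
      cases R
      exact linSet_term_cmp (ts 0) (ts 1) false
  | imp φ ψ ih ih' =>
      rename_i qq
      have h : {w : Fin (p + qq) → ℝ |
          (φ.imp ψ).Realize (w ∘ Fin.castAdd qq) (w ∘ Fin.natAdd p)}
          = {w : Fin (p + qq) → ℝ | φ.Realize (w ∘ Fin.castAdd qq) (w ∘ Fin.natAdd p)}ᶜ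
            ∪ {w : Fin (p + qq) → ℝ | ψ.Realize (w ∘ Fin.castAdd qq) (w ∘ Fin.natAdd p)} := by
        ext w
        simp only [Set.mem_union, Set.mem_compl_iff, Set.mem_setOf_eq,
          BoundedFormula.realize_imp]
        exact imp_iff_not_or
      rw [h]
      exact (ih.compl).union ih'
  | all φ' ih =>
      rename_i qq
      have key : {w : Fin (p + qq) → ℝ |
          (φ'.all).Realize (w ∘ Fin.castAdd qq) (w ∘ Fin.natAdd p)}
          = (projLast ({w : Fin (p + (qq + 1)) → ℝ |
              φ'.Realize (w ∘ Fin.castAdd (qq + 1)) (w ∘ Fin.natAdd p)}ᶜ))ᶜ := by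
        ext w
        constructor
        · intro hall
          rw [Set.mem_compl_iff]
          rintro ⟨t, ht⟩
          apply ht
          show φ'.Realize (Fin.snoc w t ∘ Fin.castAdd (qq + 1)) (Fin.snoc w t ∘ Fin.natAdd p)
          rw [Fin.snoc_comp_castAdd, Fin.snoc_comp_natAdd]
          exact BoundedFormula.realize_all.1 hall t
        · intro hmem
          refine BoundedFormula.realize_all.2 (fun t => ?_)
          by_contra hnot
          refine hmem ⟨t, fun hS => hnot ?_⟩
          have hS2 : φ'.Realize (Fin.snoc w t ∘ Fin.castAdd (qq + 1))
              (Fin.snoc w t ∘ Fin.natAdd p) := hS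
          rw [Fin.snoc_comp_castAdd, Fin.snoc_comp_natAdd] at hS2
          exact hS2
      rw [key]
      exact ((ih.compl).projLast).compl

lemma linSet_of_definable {k : ℕ} {S : Set (Fin k → ℝ)}
    (h : Set.Definable (∅ : Set ℝ) ordAddLang S) : LinSet S := by
  obtain ⟨φ, rfl⟩ := Set.empty_definable_iff.1 h
  have hb := bform_linSet (p := k) (q := 0) φ
  have hset : {w : Fin (k + 0) → ℝ | BoundedFormula.Realize φ (w ∘ Fin.castAdd 0)
      (w ∘ Fin.natAdd k)} = setOf φ.Realize := by
    ext v
    show BoundedFormula.Realize φ (v ∘ Fin.castAdd 0) (v ∘ Fin.natAdd k) ↔ Formula.Realize φ v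
    rw [show v ∘ Fin.castAdd 0 = v from rfl]
    simp only [Formula.Realize]
    exact iff_of_eq (congrArg (BoundedFormula.Realize φ v) (Subsingleton.elim _ _))
  rwa [hset] at hb

end SLAux

/-- The semilinear functions `ℝⁿ → ℝ` are exactly the members of the smallest
composition-closed class generated by rational affine functions and `ifPos`. -/
theorem semilinear_iff_generated {n : ℕ} (f : (Fin n → ℝ) → ℝ) :
    Semilinear f ↔ SemilinGen f := by
  constructor
  · intro h
    obtain ⟨L, hL⟩ := SLAux.linSet_of_definable h
    exact SLAux.gen_of_graph L hL.symm
  · intro h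
    exact SLAux.linSet_definable (SLAux.graph_linSet h)
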